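/- arXiv:1501.04519 — 2 statements merged into one kernel-verified Lean document; each statement's English description precedes it below -/
import Mathlib

section
/- Let ℓ be a prime, m, k nonnegative integers with k ≥ m, R = ℤ/ℓ^k, Δ a fundamental discriminant of an imaginary quadratic field, and A ∈ M₂(R) the matrix with rows (0, Δ(1-Δ)/4), (1, Δ). Let φ ∈ M₂(R) have the form with columns (0,0) and (t,u) for t,u ∈ R. Then ℓ^m(Aφ - φA) ∈ R[A] if and only if ℓ^{m+⌊ord_ℓ(Δ)/2⌋}·t = 0 and ℓ^{m+⌈ord_ℓ(Δ)/2⌉}·u = 0 in R. -/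
private lemma aux_unit {ℓ : ℕ} (k : ℕ) (hℓ : ℓ.Prime) {x : ℤ} (hx : ¬ (ℓ:ℤ) ∣ x) :
    IsUnit ((x : ℤ) : ZMod (ℓ^k)) := by
  have hp : Prime (ℓ:ℤ) := Nat.prime_iff_prime_int.1 hℓ
  obtain ⟨a, b, hab⟩ : IsCoprime ((ℓ:ℤ)^k) x := ((hp.coprime_iff_not_dvd).2 hx).pow_left
  have h0 : ((ℓ : ZMod (ℓ^k)))^k = 0 := by
    rw [← Nat.cast_pow, ZMod.natCast_self]
  have hcast : (a : ZMod (ℓ^k)) * (ℓ : ZMod (ℓ^k))^k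
      + (b : ZMod (ℓ^k)) * ((x:ℤ) : ZMod (ℓ^k)) = 1 := by
    have := congrArg (fun z : ℤ => ((z : ZMod (ℓ^k)))) hab
    push_cast at this
    convert this using 2
  exact IsUnit.of_mul_eq_one ((b : ℤ) : ZMod (ℓ^k))
    (by linear_combination hcast - (a : ZMod (ℓ^k)) * h0)

private lemma matrix_red {R : Type*} [CommRing R] (C D t u L : R) (m : ℕ) :
    (∃ a b : R, a • (1 : Matrix (Fin 2) (Fin 2) R) + b • !![0, C; 1, D]
        = L^m • (!![0, C; 1, D] * !![0, t; 0, u] - !![0, t; 0, u] * !![0, C; 1, D]))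
      ↔ (L^m * (2*t + D*u) = 0 ∧ L^m * (D*t - 2*C*u) = 0) := by
  constructor
  · rintro ⟨a, b, h⟩
    rw [← Matrix.ext_iff] at h
    have h00 := h 0 0
    have h01 := h 0 1
    have h10 := h 1 0
    have h11 := h 1 1
    simp [Matrix.mul_fin_two, Matrix.one_fin_two, Matrix.smul_apply,
      smul_eq_mul] at h00 h01 h10 h11
    exact ⟨by linear_combination h00 - h11 + D * h10, by linear_combination h01 - C * h10⟩
  · rintro ⟨h1, h2⟩
    refine ⟨-(L^m*t), -(L^m*u), ?_⟩
    rw [← Matrix.ext_iff]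
    intro i j
    fin_cases i <;> fin_cases j <;>
      simp [Matrix.mul_fin_two, Matrix.one_fin_two, Matrix.smul_apply, smul_eq_mul] <;>
      first
        | ring1
        | linear_combination h1
        | linear_combination -h1
        | linear_combination h2
        | linear_combination -h2

variable {R : Type*} [CommRing R]

private lemma case_v0 (C D t u L : R) (m : ℕ) (hC4 : C * 4 = D - D * D)
    (hDu : IsUnit D) :
    (L^m * (2*t + D*u) = 0 ∧ L^m * (D*t - 2*C*u) = 0) ↔ (L^m*t = 0 ∧ L^m*u = 0) := by
  constructor
  · rintro ⟨h1, h2⟩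
    have hDt0 : D * (L^m*t) = 0 := by
      linear_combination (2*C)*h1 + D*h2 - (L^m*t)*hC4
    have hDu0 : D * (L^m*u) = 0 := by
      linear_combination D*h1 - 2*h2 - (L^m*u)*hC4
    exact ⟨(hDu.mul_right_eq_zero).1 hDt0, (hDu.mul_right_eq_zero).1 hDu0⟩
  · rintro ⟨ht, hu⟩
    exact ⟨by linear_combination 2*ht + D*hu, by linear_combination D*ht - 2*C*hu⟩

private lemma case_v1 (C D W t u L : R) (m : ℕ) (hC4 : C * 4 = D - D * D)
    (hWu : IsUnit W) (hDW : D = L * W) (h2u : IsUnit (2:R)) (h4u : IsUnit (4:R)) :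
    (L^m * (2*t + D*u) = 0 ∧ L^m * (D*t - 2*C*u) = 0) ↔ (L^m*t = 0 ∧ L^(m+1)*u = 0) := by
  constructor
  · rintro ⟨h1, h2⟩
    have hDu0 : D * (L^m*u) = 0 := by
      linear_combination D*h1 - 2*h2 - (L^m*u)*hC4
    have hWu0 : W * (L^(m+1)*u) = 0 := by
      linear_combination hDu0 - (L^m*u)*hDW
    have hu : L^(m+1)*u = 0 := (hWu.mul_right_eq_zero).1 hWu0
    have h2t : (2:R) * (L^m*t) = 0 := by
      linear_combination h1 - (L^m*u)*hDW - W*hu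
    exact ⟨(h2u.mul_right_eq_zero).1 h2t, hu⟩
  · rintro ⟨ht, hu⟩
    constructor
    · linear_combination 2*ht + (L^m*u)*hDW + W*hu
    · have h4e : (4:R) * (L^m*(D*t - 2*C*u)) = 0 := by
        linear_combination (4*D)*ht - (2*(L^m*u))*hC4
          - (2*(1-D)*(L^m*u))*hDW - (2*(1-D)*W)*hu
      exact (h4u.mul_right_eq_zero).1 h4e

private lemma case_v2 (C D W t u L : R) (m : ℕ) (hL2 : (2:R) = L)
    (hWu : IsUnit W) (hDW : D = L^2 * W) (hCW : C = W - L^2*W^2) :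
    (L^m * (2*t + D*u) = 0 ∧ L^m * (D*t - 2*C*u) = 0) ↔ (L^(m+1)*t = 0 ∧ L^(m+1)*u = 0) := by
  constructor
  · rintro ⟨h1, h2⟩
    have h1' : L^(m+1)*t + L^(m+2)*(W*u) = 0 := by
      linear_combination h1 - (L^m*t)*hL2 - (L^m*u)*hDW
    have h2' : L^(m+2)*(W*t) - L^(m+1)*(C*u) = 0 := by
      linear_combination h2 - (L^m*t)*hDW + (C*(L^m*u))*hL2
    have hWu0 : W*(L^(m+1)*u) = 0 := by
      linear_combination (L*W)*h1' - h2' - (L^(m+1)*u)*hCW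
    have hu : L^(m+1)*u = 0 := (hWu.mul_right_eq_zero).1 hWu0
    have ht : L^(m+1)*t = 0 := by linear_combination h1' - (L*W)*hu
    exact ⟨ht, hu⟩
  · rintro ⟨ht, hu⟩
    constructor
    · linear_combination (L^m*t)*hL2 + ht + (L^m*u)*hDW + (L*W)*hu
    · linear_combination (L^m*t)*hDW + (L*W)*ht - (C*(L^m*u))*hL2 - C*hu

private lemma case_v3 (C D W t u L : R) (m : ℕ) (hL2 : (2:R) = L)
    (hWu : IsUnit W) (hDW : D = L^3 * W) (hCW : C = L*W - L^4*W^2) :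
    (L^m * (2*t + D*u) = 0 ∧ L^m * (D*t - 2*C*u) = 0) ↔ (L^(m+1)*t = 0 ∧ L^(m+2)*u = 0) := by
  constructor
  · rintro ⟨h1, h2⟩
    have h1' : L^(m+1)*t + L^(m+3)*(W*u) = 0 := by
      linear_combination h1 - (L^m*t)*hL2 - (L^m*u)*hDW
    have h2' : L^(m+3)*(W*t) - L^(m+2)*(W*u) + L^(m+5)*(W^2*u) = 0 := by
      linear_combination h2 - (L^m*t)*hDW + (C*(L^m*u))*hL2 + (L*(L^m*u))*hCW
    have hWu0 : W*(L^(m+2)*u) = 0 := by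
      linear_combination (L^2*W)*h1' - h2'
    have hu : L^(m+2)*u = 0 := (hWu.mul_right_eq_zero).1 hWu0
    have ht : L^(m+1)*t = 0 := by linear_combination h1' - (L*W)*hu
    exact ⟨ht, hu⟩
  · rintro ⟨ht, hu⟩
    constructor
    · linear_combination (L^m*t)*hL2 + ht + (L^m*u)*hDW + (L*W)*hu
    · linear_combination (L^m*t)*hDW + (L^2*W)*ht - (C*(L^m*u))*hL2
        - (L*(L^m*u))*hCW - (W - L^3*W^2)*hu

/-- The matrix computation at the heart of Theorem 2.8: for `A` the matrix of `α`
and `φ` with columns `(0,0)`, `(t,u)`, we have `ℓ^m(Aφ - φA) ∈ R[A]` iff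
`ℓ^{m+⌊v/2⌋}·t = 0` and `ℓ^{m+⌈v/2⌉}·u = 0`, where `v = ord_ℓ(Δ)`. -/
theorem stmt5 (ℓ : ℕ) (hℓ : ℓ.Prime) (m k : ℕ) (hk : m ≤ k) (Δ : ℤ) (hneg : Δ < 0)
    (hfund : (Δ % 4 = 1 ∧ Squarefree Δ) ∨
      (∃ d : ℤ, Δ = 4 * d ∧ (d % 4 = 2 ∨ d % 4 = 3) ∧ Squarefree d))
    (v : ℕ) (hv : v = padicValInt ℓ Δ)
    (A : Matrix (Fin 2) (Fin 2) (ZMod (ℓ ^ k)))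
    (hA : A = !![0, ((Δ * (1 - Δ) / 4 : ℤ) : ZMod (ℓ ^ k)); 1, ((Δ : ℤ) : ZMod (ℓ ^ k))])
    (t u : ZMod (ℓ ^ k))
    (φ : Matrix (Fin 2) (Fin 2) (ZMod (ℓ ^ k)))
    (hφ : φ = !![0, t; 0, u]) :
    ((ℓ : ZMod (ℓ ^ k)) ^ m • (A * φ - φ * A) ∈
        Submodule.span (ZMod (ℓ ^ k)) {(1 : Matrix (Fin 2) (Fin 2) (ZMod (ℓ ^ k))), A})
      ↔ ((ℓ : ZMod (ℓ ^ k)) ^ (m + v / 2) * t = 0 ∧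
         (ℓ : ZMod (ℓ ^ k)) ^ (m + (v + 1) / 2) * u = 0) := by
  haveI : Fact ℓ.Prime := ⟨hℓ⟩
  subst hA hφ
  rw [Submodule.mem_span_pair, matrix_red]
  have hΔ0 : Δ ≠ 0 := hneg.ne
  have h4 : (4:ℤ) ∣ Δ * (1 - Δ) := by
    rcases hfund with ⟨h1, _⟩ | ⟨d, hd, _, _⟩
    · exact Dvd.dvd.mul_left (by omega) Δ
    · exact Dvd.dvd.mul_right (by omega : (4:ℤ) ∣ Δ) _
  have hC4 : ((Δ * (1 - Δ) / 4 : ℤ) : ZMod (ℓ^k)) * 4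
      = ((Δ : ℤ) : ZMod (ℓ^k)) - ((Δ : ℤ) : ZMod (ℓ^k)) * ((Δ : ℤ) : ZMod (ℓ^k)) := by
    have h' : (Δ * (1 - Δ) / 4) * 4 = Δ - Δ * Δ := by
      rw [Int.ediv_mul_cancel h4]; ring
    calc ((Δ * (1 - Δ) / 4 : ℤ) : ZMod (ℓ^k)) * 4
        = ((Δ * (1 - Δ) / 4 * 4 : ℤ) : ZMod (ℓ^k)) := by push_cast; ring
    _ = _ := by rw [h']; push_cast; ring
  by_cases hld : (ℓ:ℤ) ∣ Δ
  · by_cases hl2 : ℓ = 2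
    · subst hl2
      have hL2 : (2 : ZMod (2^k)) = ((2:ℕ) : ZMod (2^k)) := by norm_num
      rcases hfund with ⟨h1, _⟩ | ⟨d, hd, hd4, hdsf⟩
      · exfalso
        have : (2:ℤ) ∣ Δ := by exact_mod_cast hld
        omega
      · rcases hd4 with hd2 | hd3
        · -- d ≡ 2 mod 4 : v = 3
          obtain ⟨e, he⟩ : (2:ℤ) ∣ d := by omega
          have heodd : ¬ (2:ℤ) ∣ e := by omega
          have hΔ8 : Δ = 8 * e := by omega
          have hv3 : v = 3 := by
            have hge : (3:ℕ) ≤ padicValInt 2 Δ := by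
              have h8 : ((2:ℕ):ℤ)^3 ∣ Δ := ⟨e, by rw [hΔ8]; push_cast; ring⟩
              rcases (padicValInt_dvd_iff 3 Δ).1 h8 with h | h
              · exact absurd h hΔ0
              · exact h
            have hlt : ¬ (4:ℕ) ≤ padicValInt 2 Δ := by
              intro hc
              obtain ⟨c, hc'⟩ := (padicValInt_dvd_iff 4 Δ).2 (Or.inr hc)
              apply heodd
              have h16 : (16:ℤ) ∣ Δ := ⟨c, by rw [hc']; norm_num⟩
              omega
            omega
          have heodd' : ¬ ((2:ℕ):ℤ) ∣ e := by exact_mod_cast heodd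
          have hWu : IsUnit ((e:ℤ) : ZMod (2^k)) := aux_unit k hℓ heodd'
          have hDW : ((Δ:ℤ) : ZMod (2^k)) = ((2:ℕ) : ZMod (2^k))^3 * ((e:ℤ) : ZMod (2^k)) := by
            rw [hΔ8]; push_cast; ring
          have hCW : ((Δ * (1 - Δ) / 4 : ℤ) : ZMod (2^k))
              = ((2:ℕ) : ZMod (2^k)) * ((e:ℤ) : ZMod (2^k))
                - ((2:ℕ) : ZMod (2^k))^4 * ((e:ℤ) : ZMod (2^k))^2 := by
            have h' : Δ * (1 - Δ) / 4 = 2*e - 16*e^2 := by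
              rw [show Δ * (1 - Δ) = 4 * (2*e - 16*e^2) by rw [hΔ8]; ring,
                Int.mul_ediv_cancel_left _ (by norm_num)]
            rw [h']; push_cast; ring
          have e1 : m + v/2 = m + 1 := by omega
          have e2 : m + (v+1)/2 = m + 2 := by omega
          rw [e1, e2]
          exact case_v3 _ _ _ t u _ m hL2 hWu hDW hCW
        · -- d ≡ 3 mod 4 : v = 2
          have hdodd : ¬ (2:ℤ) ∣ d := by omega
          have hv2 : v = 2 := by
            have hge : (2:ℕ) ≤ padicValInt 2 Δ := by
              have h4' : ((2:ℕ):ℤ)^2 ∣ Δ := ⟨d, by rw [hd]; push_cast; ring⟩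
              rcases (padicValInt_dvd_iff 2 Δ).1 h4' with h | h
              · exact absurd h hΔ0
              · exact h
            have hlt : ¬ (3:ℕ) ≤ padicValInt 2 Δ := by
              intro hc
              obtain ⟨c, hc'⟩ := (padicValInt_dvd_iff 3 Δ).2 (Or.inr hc)
              apply hdodd
              have h8 : (8:ℤ) ∣ Δ := ⟨c, by rw [hc']; norm_num⟩
              omega
            omega
          have hdodd' : ¬ ((2:ℕ):ℤ) ∣ d := by exact_mod_cast hdodd
          have hWu : IsUnit ((d:ℤ) : ZMod (2^k)) := aux_unit k hℓ hdodd'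
          have hDW : ((Δ:ℤ) : ZMod (2^k)) = ((2:ℕ) : ZMod (2^k))^2 * ((d:ℤ) : ZMod (2^k)) := by
            rw [hd]; push_cast; ring
          have hCW : ((Δ * (1 - Δ) / 4 : ℤ) : ZMod (2^k))
              = ((d:ℤ) : ZMod (2^k)) - ((2:ℕ) : ZMod (2^k))^2 * ((d:ℤ) : ZMod (2^k))^2 := by
            have h' : Δ * (1 - Δ) / 4 = d - 4*d^2 := by
              rw [show Δ * (1 - Δ) = 4 * (d - 4*d^2) by rw [hd]; ring,
                Int.mul_ediv_cancel_left _ (by norm_num)]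
            rw [h']; push_cast; ring
          have e1 : m + v/2 = m + 1 := by omega
          have e2 : m + (v+1)/2 = m + 1 := by omega
          rw [e1, e2]
          exact case_v2 _ _ _ t u _ m hL2 hWu hDW hCW
    · -- ℓ odd, ℓ ∣ Δ : v = 1
      have hp : Prime (ℓ:ℤ) := Nat.prime_iff_prime_int.1 hℓ
      have hnd2 : ¬ (ℓ:ℤ) ∣ 2 := by
        intro h
        have h2 : ℓ ∣ 2 := by exact_mod_cast h
        have := Nat.le_of_dvd (by norm_num) h2
        have := hℓ.two_le
        omega
      have hsq : ¬ ((ℓ:ℤ) * (ℓ:ℤ)) ∣ Δ := by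
        rcases hfund with ⟨_, hsf⟩ | ⟨d, hd, _, hsf⟩
        · intro hc; exact hp.not_unit (hsf _ hc)
        · intro hc
          have hcop : IsCoprime ((ℓ:ℤ)*(ℓ:ℤ)) 4 := by
            have h1 : IsCoprime (ℓ:ℤ) 4 := by
              have := (hp.coprime_iff_not_dvd).2 hnd2
              exact (by norm_num : (4:ℤ) = 2 * 2) ▸ this.mul_right this
            exact h1.mul_left h1
          have : ((ℓ:ℤ)*(ℓ:ℤ)) ∣ d := hcop.dvd_of_dvd_mul_left (hd ▸ hc)
          exact hp.not_unit (hsf _ this)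
      have hv1 : v = 1 := by
        have hge : (1:ℕ) ≤ padicValInt ℓ Δ := by
          have h1' : (ℓ:ℤ)^1 ∣ Δ := by rwa [pow_one]
          rcases (padicValInt_dvd_iff 1 Δ).1 h1' with h | h
          · exact absurd h hΔ0
          · exact h
        have hlt : ¬ (2:ℕ) ≤ padicValInt ℓ Δ := by
          intro hc
          have : (ℓ:ℤ)^2 ∣ Δ := (padicValInt_dvd_iff 2 Δ).2 (Or.inr hc)
          exact hsq (by rwa [← sq])
        omega
      obtain ⟨Δ₀, hfac⟩ := hld
      have hnd : ¬ (ℓ:ℤ) ∣ Δ₀ := by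
        rintro ⟨c, hc⟩
        exact hsq ⟨c, by rw [hfac, hc]; ring⟩
      have hWu : IsUnit ((Δ₀:ℤ) : ZMod (ℓ^k)) := aux_unit k hℓ hnd
      have hDW : ((Δ:ℤ) : ZMod (ℓ^k)) = (ℓ : ZMod (ℓ^k)) * ((Δ₀:ℤ) : ZMod (ℓ^k)) := by
        rw [hfac]; push_cast; ring
      have h2u : IsUnit (2 : ZMod (ℓ^k)) := by
        have := aux_unit k hℓ hnd2
        simpa using this
      have h4u : IsUnit (4 : ZMod (ℓ^k)) := by
        rw [(by norm_num : (4 : ZMod (ℓ^k)) = 2 * 2)]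
        exact h2u.mul h2u
      have e1 : m + v/2 = m := by omega
      have e2 : m + (v+1)/2 = m + 1 := by omega
      rw [e1, e2]
      exact case_v1 _ _ _ t u _ m hC4 hWu hDW h2u h4u
  · -- v = 0
    have hv0 : v = 0 := by rw [hv]; exact padicValInt.eq_zero_of_not_dvd hld
    have hDun : IsUnit ((Δ:ℤ) : ZMod (ℓ^k)) := aux_unit k hℓ hld
    have e1 : m + v/2 = m := by omega
    have e2 : m + (v+1)/2 = m := by omega
    rw [e1, e2]
    exact case_v0 _ _ t u _ m hC4 hDun
end

section
/- Let K = ℚ(√-d) with 𝒪_K = ℤ[√-d] (so Δ_K = -4d). In M₂(ℤ/2^k), with √-d represented as a matrix S satisfying S² = -d·I, and τ an element with τ² = I and τS = -Sτ, an element (a + bS)τ lies in the subring R[S] = {xI + yS} of M₂(ℤ/2^k) if and only if 2^{k - ⌊ord_2(4d)/2⌋} divides a and 2^{k - ⌈ord_2(4d)/2⌉} divides b (as integers, where a,b ∈ ℤ). -/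
private lemma pow2_dvd_iff (k m : ℕ) (b : ℤ) :
    (2 : ℤ) ^ k ∣ 2 ^ m * b ↔ (2 : ℤ) ^ (k - m) ∣ b := by
  rcases le_or_gt k m with h | h
  · rw [Nat.sub_eq_zero_of_le h, pow_zero]
    simp only [isUnit_one, IsUnit.dvd, iff_true]
    exact dvd_mul_of_dvd_left (pow_dvd_pow 2 h) b
  · obtain ⟨j, rfl⟩ := Nat.exists_eq_add_of_le h.le
    rw [pow_add, Nat.add_sub_cancel_left,
      mul_dvd_mul_iff_left (pow_ne_zero m (two_ne_zero (α := ℤ)))]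

private lemma padicValInt_two_pow_mul (m : ℕ) (e : ℤ) (he : ¬ (2 : ℤ) ∣ e) (he0 : e ≠ 0) :
    padicValInt 2 ((2 : ℤ) ^ m * e) = m := by
  have h0 : padicValInt 2 e = 0 :=
    padicValInt.eq_zero_of_not_dvd (by exact_mod_cast he)
  have hpow : ((2 : ℤ) ^ m) = (((2 ^ m : ℕ) : ℤ)) := by push_cast; ring
  rw [padicValInt.mul (pow_ne_zero m (two_ne_zero (α := ℤ))) he0, h0, add_zero,
    hpow, padicValInt.of_nat, padicValNat.prime_pow]

/-- In `M₂(ℤ/2^k)` with `S² = -d·I`, `τ² = I`, `τS = -Sτ` (concretely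
`S = [[0,-d],[1,0]]`, `τ = [[1,0],[0,-1]]`), the element `(a + bS)τ` lies in
`R[S]` iff `2^{k-⌊ord₂(4d)/2⌋} ∣ a` and `2^{k-⌈ord₂(4d)/2⌉} ∣ b`. -/
theorem stmt7 (k : ℕ) (d : ℤ) (hd : 0 < d) (hsf : Squarefree d)
    (hdmod : d % 4 = 1 ∨ d % 4 = 2)
    (v : ℕ) (hv : v = padicValInt 2 (4 * d))
    (S T : Matrix (Fin 2) (Fin 2) (ZMod (2 ^ k)))
    (hS : S = !![0, ((-d : ℤ) : ZMod (2 ^ k)); 1, 0])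
    (hT : T = !![1, 0; 0, -1])
    (hS2 : S * S = ((-d : ℤ) : ZMod (2 ^ k)) • (1 : Matrix (Fin 2) (Fin 2) (ZMod (2 ^ k))))
    (hT2 : T * T = 1) (hST : T * S + S * T = 0)
    (a b : ℤ) :
    (((a : ZMod (2 ^ k)) • (1 : Matrix (Fin 2) (Fin 2) (ZMod (2 ^ k)))
        + (b : ZMod (2 ^ k)) • S) * T ∈
      Submodule.span (ZMod (2 ^ k)) {(1 : Matrix (Fin 2) (Fin 2) (ZMod (2 ^ k))), S})
    ↔ ((2 : ℤ) ^ (k - v / 2) ∣ a ∧ (2 : ℤ) ^ (k - (v + 1) / 2) ∣ b) := by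
  -- Step 1: reduce membership to two congruences
  have key : (((a : ZMod (2 ^ k)) • (1 : Matrix (Fin 2) (Fin 2) (ZMod (2 ^ k)))
        + (b : ZMod (2 ^ k)) • S) * T ∈
      Submodule.span (ZMod (2 ^ k)) {(1 : Matrix (Fin 2) (Fin 2) (ZMod (2 ^ k))), S})
      ↔ (((2 * a : ℤ) : ZMod (2 ^ k)) = 0 ∧ ((2 * (b * d) : ℤ) : ZMod (2 ^ k)) = 0) := by
    rw [Submodule.mem_span_pair]
    subst hS hT
    constructor
    · rintro ⟨x, y, h⟩
      rw [← Matrix.ext_iff] at h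
      have h00 := h 0 0
      have h01 := h 0 1
      have h10 := h 1 0
      have h11 := h 1 1
      simp [Matrix.mul_apply, Fin.sum_univ_two, Matrix.one_apply] at h00 h01 h10 h11
      push_cast
      exact ⟨by linear_combination h11 - h00,
        by linear_combination -h01 - (d : ZMod (2 ^ k)) * h10⟩
    · rintro ⟨h1, h2⟩
      refine ⟨a, b, ?_⟩
      rw [← Matrix.ext_iff]
      intro i j
      fin_cases i <;> fin_cases j <;>
        simp [Matrix.mul_apply, Fin.sum_univ_two, Matrix.one_apply]
      · push_cast at h2 ⊢; linear_combination -h2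
      · push_cast at h1 ⊢; linear_combination h1
  rw [key]
  -- Step 2: translate congruences to integer divisibilities
  have hz : ∀ z : ℤ, ((z : ZMod (2 ^ k)) = 0) ↔ (2 : ℤ) ^ k ∣ z := by
    intro z
    rw [ZMod.intCast_zmod_eq_zero_iff_dvd]
    push_cast
    rfl
  rw [hz, hz]
  have ha : (2 : ℤ) ^ k ∣ 2 * a ↔ (2 : ℤ) ^ (k - 1) ∣ a := by
    have := pow2_dvd_iff k 1 a
    rwa [pow_one] at this
  -- Step 3: compute v in each case
  rcases hdmod with h1 | h2
  · have hnd : ¬ (2 : ℤ) ∣ d := by omega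
    have hv2 : v = 2 := by
      rw [hv]
      have h4 : (4 * d : ℤ) = 2 ^ 2 * d := by ring
      rw [h4, padicValInt_two_pow_mul 2 d hnd hd.ne']
    subst hv2
    norm_num
    rw [ha]
    have hco : IsCoprime ((2 : ℤ) ^ (k - 1)) d :=
      ((Int.prime_two.coprime_iff_not_dvd).mpr hnd).pow_left
    have hb : (2 : ℤ) ^ k ∣ 2 * (b * d) ↔ (2 : ℤ) ^ (k - 1) ∣ b := by
      rw [show (2 : ℤ) * (b * d) = 2 ^ 1 * (b * d) by ring, pow2_dvd_iff]
      exact ⟨fun h => hco.dvd_of_dvd_mul_right h, fun h => h.mul_right d⟩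
    rw [hb]
  · obtain ⟨e, rfl⟩ : ∃ e, d = 2 * e := ⟨d / 2, by omega⟩
    have hne : ¬ (2 : ℤ) ∣ e := by omega
    have he0 : e ≠ 0 := by omega
    have hv3 : v = 3 := by
      rw [hv, show (4 * (2 * e) : ℤ) = 2 ^ 3 * e by ring,
        padicValInt_two_pow_mul 3 e hne he0]
    subst hv3
    norm_num
    rw [ha]
    have hco : IsCoprime ((2 : ℤ) ^ (k - 2)) e :=
      ((Int.prime_two.coprime_iff_not_dvd).mpr hne).pow_left
    have hb : (2 : ℤ) ^ k ∣ 2 * (b * (2 * e)) ↔ (2 : ℤ) ^ (k - 2) ∣ b := by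
      rw [show (2 : ℤ) * (b * (2 * e)) = 2 ^ 2 * (b * e) by ring, pow2_dvd_iff]
      exact ⟨fun h => hco.dvd_of_dvd_mul_right h, fun h => h.mul_right e⟩
    rw [hb]
end
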